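/- Fix ε, δ ∈ (0,1), w ∈ [-1,1], and d ∈ ℕ. Let u, v ∈ [-1,1]^d be vectors with i.i.d. uniform entries, defining the two-layer network g(x) = vᵀ σ(u·x). If d ≥ 2⌈(16/ε²)·log(2/δ)⌉, then with probability at least 1-δ there exists a binary mask m ∈ {0,1}^d such that |wx - (v ⊙ m)ᵀ σ(u·x)| ≤ ε for all x ∈ ℝ with |x| ≤ 1. -/

import Mathlib

open MeasureTheory Real

noncomputable def unif : Measure ℝ := (2 : ENNReal)⁻¹ • (volume.restrict (Set.Icc (-1:ℝ) 1))

instance : IsProbabilityMeasure unif := by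
  constructor
  simp [unif, Real.volume_Icc]
  norm_num
  exact ENNReal.inv_mul_cancel (by norm_num) (by norm_num)

lemma unif_Icc {a b : ℝ} (h1 : -1 ≤ a) (h2 : b ≤ 1) :
    unif (Set.Icc a b) = ENNReal.ofReal ((b - a)/2) := by
  rw [unif, Measure.smul_apply, Measure.restrict_apply measurableSet_Icc,
      Set.inter_eq_left.mpr (Set.Icc_subset_Icc h1 h2), Real.volume_Icc, smul_eq_mul,
      ENNReal.ofReal_div_of_pos two_pos, ENNReal.ofReal_ofNat, ENNReal.div_eq_inv_mul]

lemma tail (d : ℕ) (S : Set (ℝ × ℝ)) :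
    ((Measure.pi fun _ : Fin d => unif).prod (Measure.pi fun _ : Fin d => unif))
      {uv : (Fin d → ℝ) × (Fin d → ℝ) | ∀ i, (uv.1 i, uv.2 i) ∉ S}
      = ((unif.prod unif) Sᶜ) ^ d := by
  have e := MeasureTheory.measurePreserving_arrowProdEquivProdArrow ℝ ℝ (Fin d)
    (fun _ => unif) (fun _ => unif)
  rw [← e.measure_preimage_equiv]
  have hpre : (MeasurableEquiv.arrowProdEquivProdArrow ℝ ℝ (Fin d)) ⁻¹'
      {uv : (Fin d → ℝ) × (Fin d → ℝ) | ∀ i, (uv.1 i, uv.2 i) ∉ S}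
      = Set.pi Set.univ (fun _ : Fin d => Sᶜ) := by
    ext f
    simp [MeasurableEquiv.arrowProdEquivProdArrow, Equiv.arrowProdEquivProdArrow, Set.mem_pi]
  rw [hpre, Measure.pi_pi]
  simp

lemma sum_mask {d : ℕ} (u v : Fin d → ℝ) (x : ℝ) (i j : Fin d) (hij : i ≠ j) :
    ∑ k, (if (decide (k = i ∨ k = j) : Bool) then v k else 0) * max (u k * x) 0
      = v i * max (u i * x) 0 + v j * max (u j * x) 0 := by
  rw [← Finset.sum_subset (Finset.subset_univ ({i, j} : Finset (Fin d)))
    (fun k _ hk => by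
      simp only [Finset.mem_insert, Finset.mem_singleton, not_or] at hk
      simp [hk.1, hk.2]),
    Finset.sum_pair hij]
  simp

lemma approx_pos {ε w u v : ℝ} (hu : 1 - ε/2 ≤ u) (hu1 : u ≤ 1)
    (hv : |v - w| ≤ ε/2) (hv1 : |v| ≤ 1) : |w - v * u| ≤ ε := by
  rw [abs_le] at *
  constructor <;> nlinarith

lemma approx_neg {ε w u v : ℝ} (hu : -1 ≤ u) (hu1 : u ≤ -(1 - ε/2))
    (hv : |v + w| ≤ ε/2) (hv1 : |v| ≤ 1) : |w - v * u| ≤ ε := by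
  rw [abs_le] at *
  constructor <;> nlinarith

lemma memJ {ε w v : ℝ} (hv : v ∈ Set.Icc (max (-1) (w - ε/2)) (min 1 (w + ε/2))) :
    |v - w| ≤ ε/2 ∧ |v| ≤ 1 := by
  obtain ⟨h1, h2⟩ := hv
  have a1 := le_trans (le_max_right (-1) (w - ε/2)) h1
  have a2 := le_trans (le_max_left (-1) (w - ε/2)) h1
  have a3 := le_trans h2 (min_le_left 1 (w + ε/2))
  have a4 := le_trans h2 (min_le_right 1 (w + ε/2))
  constructor <;> rw [abs_le] <;> constructor <;> linarith

lemma Jlen {ε w : ℝ} (hε : 0 < ε) (hε1 : ε ≤ 1) (hw : -1 ≤ w) (hw1 : w ≤ 1) :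
    ε/2 ≤ min 1 (w + ε/2) - max (-1) (w - ε/2) := by
  rcases le_total w 0 with h | h
  · have h1 : min 1 (w + ε/2) = w + ε/2 := min_eq_right (by linarith)
    have h2 : max (-1) (w - ε/2) ≤ w := max_le (by linarith) (by linarith)
    linarith
  · have h1 : w ≤ min 1 (w + ε/2) := le_min hw1 (by linarith)
    have h2 : max (-1) (w - ε/2) = w - ε/2 := max_eq_right (by linarith)
    linarith

lemma pow_bound {ε δ : ℝ} (d : ℕ) (hε : 0 < ε) (hε1 : ε < 1) (hδ : 0 < δ) (hδ1 : δ < 1)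
    (hd : d ≥ 2 * ⌈16 / ε ^ 2 * Real.log (2 / δ)⌉₊) : (1 - ε^2/16)^d ≤ δ/2 := by
  have h1 : 16 / ε ^ 2 * Real.log (2 / δ) ≤ (d : ℝ) := by
    calc 16 / ε ^ 2 * Real.log (2 / δ) ≤ (⌈16 / ε ^ 2 * Real.log (2 / δ)⌉₊ : ℝ) := Nat.le_ceil _
    _ ≤ ((2 * ⌈16 / ε ^ 2 * Real.log (2 / δ)⌉₊ : ℕ) : ℝ) := by
        push_cast; linarith [Nat.cast_nonneg (α := ℝ) ⌈16 / ε ^ 2 * Real.log (2 / δ)⌉₊]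
    _ ≤ (d : ℝ) := by exact_mod_cast hd
  have hεsq : 0 < ε ^ 2 := by positivity
  have hlog : Real.log (2 / δ) ≤ (d : ℝ) * (ε ^ 2 / 16) := by
    have := mul_le_mul_of_nonneg_right h1 (le_of_lt (by positivity : (0:ℝ) < ε ^ 2 / 16))
    calc Real.log (2 / δ) = 16 / ε ^ 2 * Real.log (2 / δ) * (ε ^ 2 / 16) := by
          field_simp
    _ ≤ (d : ℝ) * (ε ^ 2 / 16) := this
  have h2 : (1 - ε^2/16)^d ≤ Real.exp (-(ε^2/16)) ^ d := by
    apply pow_le_pow_left₀ (by nlinarith)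
    linarith [Real.add_one_le_exp (-(ε^2/16))]
  have h3 : Real.exp (-(ε^2/16)) ^ d = Real.exp ((d : ℝ) * -(ε^2/16)) := by
    rw [← Real.exp_nat_mul]
  have h4 : Real.exp ((d : ℝ) * -(ε^2/16)) ≤ Real.exp (-Real.log (2/δ)) := by
    apply Real.exp_le_exp.mpr; nlinarith
  have h5 : Real.exp (-Real.log (2/δ)) = δ/2 := by
    rw [Real.exp_neg, Real.exp_log (by positivity)]
    field_simp
  calc (1 - ε^2/16)^d ≤ Real.exp (-(ε^2/16)) ^ d := h2
  _ = Real.exp ((d : ℝ) * -(ε^2/16)) := h3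
  _ ≤ Real.exp (-Real.log (2/δ)) := h4
  _ = δ/2 := h5

theorem stmt4 (ε δ w : ℝ) (hε : ε ∈ Set.Ioo (0:ℝ) 1) (hδ : δ ∈ Set.Ioo (0:ℝ) 1)
    (hw : w ∈ Set.Icc (-1:ℝ) 1) (d : ℕ)
    (hd : d ≥ 2 * ⌈16 / ε ^ 2 * Real.log (2 / δ)⌉₊) :
    ENNReal.ofReal (1 - δ) ≤
      ((Measure.pi fun _ : Fin d => unif).prod (Measure.pi fun _ : Fin d => unif))
        {uv | ∃ m : Fin d → Bool, ∀ x : ℝ, |x| ≤ 1 →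
          |w * x - ∑ i, (if m i then uv.2 i else 0) * max (uv.1 i * x) 0| ≤ ε} := by
  obtain ⟨hε0, hε1⟩ := hε
  obtain ⟨hδ0, hδ1⟩ := hδ
  obtain ⟨hw0, hw1⟩ := hw
  set μ := ((Measure.pi fun _ : Fin d => unif).prod (Measure.pi fun _ : Fin d => unif)) with hμ
  set Sp : Set (ℝ × ℝ) :=
    Set.Icc (1 - ε/2) 1 ×ˢ Set.Icc (max (-1) (w - ε/2)) (min 1 (w + ε/2)) with hSp
  set Sm : Set (ℝ × ℝ) :=
    Set.Icc (-1 : ℝ) (-(1 - ε/2)) ×ˢ Set.Icc (max (-1) (-w - ε/2)) (min 1 (-w + ε/2)) with hSm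
  set Cp : Set ((Fin d → ℝ) × (Fin d → ℝ)) := {uv | ∀ i, (uv.1 i, uv.2 i) ∉ Sp} with hCp
  set Cm : Set ((Fin d → ℝ) × (Fin d → ℝ)) := {uv | ∀ i, (uv.1 i, uv.2 i) ∉ Sm} with hCm
  set T : Set ((Fin d → ℝ) × (Fin d → ℝ)) :=
    {uv | ∃ m : Fin d → Bool, ∀ x : ℝ, |x| ≤ 1 →
      |w * x - ∑ i, (if m i then uv.2 i else 0) * max (uv.1 i * x) 0| ≤ ε} with hT
  -- inclusion
  have hsub : Cpᶜ ∩ Cmᶜ ⊆ T := by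
    rintro ⟨u, v⟩ ⟨hp, hm⟩
    simp only [hCp, hCm, Set.mem_compl_iff, Set.mem_setOf_eq, not_forall, not_not] at hp hm
    obtain ⟨i, hip⟩ := hp
    obtain ⟨j, hjm⟩ := hm
    obtain ⟨hui, hvi⟩ := hip
    obtain ⟨huj, hvj⟩ := hjm
    obtain ⟨hui1, hui2⟩ := hui
    obtain ⟨huj1, huj2⟩ := huj
    have hvi' := memJ hvi
    have hvj' : |v j + w| ≤ ε/2 ∧ |v j| ≤ 1 := by
      have := memJ hvj
      rwa [sub_neg_eq_add] at this
    have hij : i ≠ j := by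
      intro h
      rw [h] at hui1
      linarith
    refine ⟨fun k => decide (k = i ∨ k = j), fun x hx => ?_⟩
    rw [sum_mask u v x i j hij]
    rw [abs_le] at hx
    rcases le_total 0 x with hx0 | hx0
    · rw [max_eq_left (mul_nonneg (by linarith) hx0),
        max_eq_right (mul_nonpos_of_nonpos_of_nonneg (by linarith) hx0)]
      have heq : w * x - (v i * (u i * x) + v j * 0) = (w - v i * u i) * x := by ring
      rw [heq, abs_mul]
      calc |w - v i * u i| * |x| ≤ ε * 1 := by
            apply mul_le_mul (approx_pos hui1 hui2 hvi'.1 hvi'.2) (abs_le.mpr ⟨hx.1, hx.2⟩)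
              (abs_nonneg x) (le_of_lt hε0)
      _ = ε := mul_one ε
    · rw [max_eq_right (mul_nonpos_of_nonneg_of_nonpos (by linarith) hx0),
        max_eq_left (by nlinarith : (0:ℝ) ≤ u j * x)]
      have heq : w * x - (v i * 0 + v j * (u j * x)) = (w - v j * u j) * x := by ring
      rw [heq, abs_mul]
      calc |w - v j * u j| * |x| ≤ ε * 1 := by
            apply mul_le_mul (approx_neg huj1 huj2 hvj'.1 hvj'.2) (abs_le.mpr ⟨hx.1, hx.2⟩)
              (abs_nonneg x) (le_of_lt hε0)
      _ = ε := mul_one ε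
  -- probability of good pair per coordinate
  have hofmul : ENNReal.ofReal (ε^2/16) = ENNReal.ofReal (ε/4) * ENNReal.ofReal (ε/4) := by
    rw [← ENNReal.ofReal_mul (by positivity)]
    ring_nf
  have hprodp : ENNReal.ofReal (ε^2/16) ≤ (unif.prod unif) Sp := by
    rw [hSp, Measure.prod_prod, unif_Icc (by linarith) le_rfl,
      unif_Icc (le_max_left _ _) (min_le_left _ _), hofmul]
    apply mul_le_mul'
    · apply ENNReal.ofReal_le_ofReal; linarith
    · apply ENNReal.ofReal_le_ofReal
      have := Jlen hε0 (le_of_lt hε1) hw0 hw1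
      linarith
  have hprodm : ENNReal.ofReal (ε^2/16) ≤ (unif.prod unif) Sm := by
    rw [hSm, Measure.prod_prod, unif_Icc le_rfl (by linarith),
      unif_Icc (le_max_left _ _) (min_le_left _ _), hofmul]
    apply mul_le_mul'
    · apply ENNReal.ofReal_le_ofReal; linarith
    · apply ENNReal.ofReal_le_ofReal
      have := Jlen (w := -w) hε0 (le_of_lt hε1) (by linarith) (by linarith)
      linarith
  -- tail bounds
  have hcompl : ∀ S : Set (ℝ × ℝ), MeasurableSet S → ENNReal.ofReal (ε^2/16) ≤ (unif.prod unif) S →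
      (unif.prod unif) Sᶜ ≤ ENNReal.ofReal (1 - ε^2/16) := by
    intro S hS hle
    rw [prob_compl_eq_one_sub hS]
    calc 1 - (unif.prod unif) S ≤ 1 - ENNReal.ofReal (ε^2/16) := tsub_le_tsub_left hle 1
    _ = ENNReal.ofReal 1 - ENNReal.ofReal (ε^2/16) := by rw [ENNReal.ofReal_one]
    _ = ENNReal.ofReal (1 - ε^2/16) := (ENNReal.ofReal_sub 1 (by positivity)).symm
  have hmeasp : MeasurableSet Sp := measurableSet_Icc.prod measurableSet_Icc
  have hmeasm : MeasurableSet Sm := measurableSet_Icc.prod measurableSet_Icc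
  have hpow : ENNReal.ofReal (1 - ε^2/16) ^ d ≤ ENNReal.ofReal (δ/2) := by
    rw [← ENNReal.ofReal_pow (by nlinarith)]
    exact ENNReal.ofReal_le_ofReal (pow_bound d hε0 hε1 hδ0 hδ1 hd)
  have htailp : μ Cp ≤ ENNReal.ofReal (δ/2) := by
    rw [hCp, hμ, tail d Sp]
    exact le_trans (pow_le_pow_left₀ zero_le (hcompl Sp hmeasp hprodp) d) hpow
  have htailm : μ Cm ≤ ENNReal.ofReal (δ/2) := by
    rw [hCm, hμ, tail d Sm]
    exact le_trans (pow_le_pow_left₀ zero_le (hcompl Sm hmeasm hprodm) d) hpow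
  -- combine
  have key : (1 : ENNReal) ≤ μ T + ENNReal.ofReal δ := by
    calc (1 : ENNReal) = μ Set.univ := (measure_univ).symm
    _ = μ ((Cpᶜ ∩ Cmᶜ) ∪ (Cp ∪ Cm)) := by
        rw [show Cp ∪ Cm = (Cpᶜ ∩ Cmᶜ)ᶜ by rw [Set.compl_inter, compl_compl, compl_compl],
          Set.union_compl_self]
    _ ≤ μ (Cpᶜ ∩ Cmᶜ) + μ (Cp ∪ Cm) := measure_union_le _ _
    _ ≤ μ T + (μ Cp + μ Cm) := add_le_add (measure_mono hsub) (measure_union_le _ _)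
    _ ≤ μ T + (ENNReal.ofReal (δ/2) + ENNReal.ofReal (δ/2)) :=
        add_le_add le_rfl (add_le_add htailp htailm)
    _ = μ T + ENNReal.ofReal δ := by
        rw [← ENNReal.ofReal_add (by linarith) (by linarith)]
        norm_num
  have final : ENNReal.ofReal (1 - δ) + ENNReal.ofReal δ ≤ μ T + ENNReal.ofReal δ := by
    rw [← ENNReal.ofReal_add (by linarith) (le_of_lt hδ0)]
    calc ENNReal.ofReal (1 - δ + δ) = 1 := by norm_num
    _ ≤ μ T + ENNReal.ofReal δ := key
  exact (ENNReal.add_le_add_iff_right ENNReal.ofReal_ne_top).mp final
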